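/- arXiv:1807.04136 — 2 statements merged into one kernel-verified Lean document; each statement's English description precedes it below -/
import Mathlib

section
/- For genus g = 2, the Verlinde formula specializes to a binomial coefficient: for every positive integer k, ((k+2)/2) · Σ_{j=1}^{k+1} (sin²(jπ/(k+2)))^{-1} = C(k+3, 3), i.e., the Verlinde number equals (k+1)(k+2)(k+3)/6. -/
open Complex Finset

lemma aux1 (c z : ℂ) (N : ℕ) :
    (z - 1) ^ 3 * ∑ m ∈ range N, ((m : ℂ) ^ 2 - c * m) * z ^ m
      = (z - 1) * ((1 - c) * z + (c * N - (N : ℂ) ^ 2 + 2) * z ^ N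
          + (((N : ℂ) - 1) ^ 2 - c * ((N : ℂ) - 1)) * z ^ (N + 1))
        + 2 * (z ^ N - z ^ 2) := by
  induction N with
  | zero => simp; ring
  | succ N ih =>
      rw [Finset.sum_range_succ, mul_add, ih]
      push_cast
      ring

lemma aux2 (n : ℕ) (z : ℂ) (hz : z ≠ 1) (hzn : z ^ n = 1) :
    (z - 1) ^ 2 * ∑ m ∈ range n, ((m : ℂ) ^ 2 - (n : ℂ) * m) * z ^ m
      = -2 * n * z := by
  have h := aux1 (n : ℂ) z n
  rw [pow_succ z n, hzn, one_mul] at h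
  have hz1 : z - 1 ≠ 0 := sub_ne_zero.mpr hz
  apply mul_left_cancel₀ hz1
  linear_combination h

lemma aux3 (θ : ℂ) :
    (Complex.sin θ) ^ 2 * (-4 * Complex.exp (2 * θ * I)) = (Complex.exp (2 * θ * I) - 1) ^ 2 := by
  rw [Complex.sin]
  have h2 : Complex.exp (2 * θ * I) = Complex.exp (θ * I) ^ 2 := by
    rw [← Complex.exp_nat_mul]; ring_nf
  have hneg : Complex.exp (-θ * I) = (Complex.exp (θ * I))⁻¹ := by
    rw [← Complex.exp_neg]; ring_nf
  rw [h2, hneg]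
  have hw : Complex.exp (θ * I) ≠ 0 := Complex.exp_ne_zero _
  field_simp
  ring_nf
  simp [Complex.I_sq]
  ring_nf

lemma aux4 (c : ℂ) (N : ℕ) :
    ∑ m ∈ range N, (c * m - (m : ℂ) ^ 2)
      = c * N * (N - 1) / 2 - (N - 1) * N * (2 * N - 1) / 6 := by
  induction N with
  | zero => simp
  | succ N ih =>
      rw [Finset.sum_range_succ, ih]
      push_cast
      ring

lemma aux5 (k : ℕ) :
    ∑ j ∈ Finset.Icc 1 (k + 1),
        (((Real.sin ((j : ℝ) * Real.pi / ((k : ℝ) + 2)) : ℂ)) ^ 2)⁻¹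
      = (((k : ℂ) + 2) ^ 2 - 1) / 3 := by
  set n : ℕ := k + 2 with hn
  have hn0 : (n : ℂ) ≠ 0 := Nat.cast_ne_zero.mpr (by omega)
  set ζ : ℂ := Complex.exp (2 * Real.pi * I / n) with hζ
  have hprim : IsPrimitiveRoot ζ n := Complex.isPrimitiveRoot_exp n (by omega)
  -- per-term identity
  have hterm : ∀ j ∈ Finset.Icc 1 (k + 1),
      (((Real.sin ((j : ℝ) * Real.pi / ((k : ℝ) + 2)) : ℂ)) ^ 2)⁻¹
        = (2 / n) * ∑ m ∈ range n, ((m : ℂ) ^ 2 - (n : ℂ) * m) * (ζ ^ j) ^ m := by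
    intro j hj
    rw [Finset.mem_Icc] at hj
    set z : ℂ := ζ ^ j with hzdef
    have hz1 : z ≠ 1 := hprim.pow_ne_one_of_pos_of_lt (by omega) (by omega)
    have hz0 : z ≠ 0 := pow_ne_zero _ (Complex.exp_ne_zero _)
    have hzn : z ^ n = 1 := by
      rw [hzdef, ← pow_mul, mul_comm, pow_mul, hprim.pow_eq_one, one_pow]
    have hze : Complex.exp (2 * (((j : ℝ) * Real.pi / ((k : ℝ) + 2) : ℝ) : ℂ) * I) = z := by
      rw [hzdef, hζ, ← Complex.exp_nat_mul]
      congr 1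
      have h1 : ((k : ℂ) + 2) ≠ 0 := by
        have h2 : ((n : ℂ)) = (k : ℂ) + 2 := by push_cast [hn]; ring
        rw [← h2]; exact hn0
      have hnc : ((n : ℂ)) = (k : ℂ) + 2 := by push_cast [hn]; ring
      have hθ : (((j : ℝ) * Real.pi / ((k : ℝ) + 2) : ℝ) : ℂ)
          = (j : ℂ) * (Real.pi : ℂ) / ((k : ℂ) + 2) := by push_cast; ring
      rw [hnc, hθ]
      field_simp
    have hsin : (((Real.sin ((j : ℝ) * Real.pi / ((k : ℝ) + 2)) : ℂ)) ^ 2) * (-4 * z)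
        = (z - 1) ^ 2 := by
      rw [Complex.ofReal_sin, ← hze]
      exact aux3 _
    have hA := aux2 n z hz1 hzn
    set s : ℂ := ((Real.sin ((j : ℝ) * Real.pi / ((k : ℝ) + 2)) : ℂ)) ^ 2 with hs
    set S : ℂ := ∑ m ∈ range n, ((m : ℂ) ^ 2 - (n : ℂ) * m) * z ^ m with hS
    have h2 : 2 * s * S = n := by
      have hne : (-2 : ℂ) * z ≠ 0 := mul_ne_zero (by norm_num) hz0
      apply mul_left_cancel₀ hne
      rw [← hsin] at hA
      linear_combination hA
    apply inv_eq_of_mul_eq_one_right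
    have : s * ((2 / n) * S) = (2 * s * S) / n := by ring
    rw [this, h2, div_self hn0]
  rw [Finset.sum_congr rfl hterm, ← Finset.mul_sum, Finset.sum_comm]
  have hinner : ∀ m ∈ range n,
      ∑ j ∈ Finset.Icc 1 (k + 1), ((m : ℂ) ^ 2 - (n : ℂ) * m) * (ζ ^ j) ^ m
        = (n : ℂ) * m - (m : ℂ) ^ 2 := by
    intro m hm
    rw [Finset.mem_range] at hm
    rcases Nat.eq_zero_or_pos m with hm0 | hm1
    · subst hm0; simp
    · have hx1 : ζ ^ m ≠ 1 := hprim.pow_ne_one_of_pos_of_lt hm1.ne' hm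
      have hxn : (ζ ^ m) ^ n = 1 := by
        rw [← pow_mul, mul_comm, pow_mul, hprim.pow_eq_one, one_pow]
      have hgeom : ∑ j ∈ range n, (ζ ^ m) ^ j = 0 := by
        simp [geom_sum_eq hx1, hxn]
      have hsplit : ∑ j ∈ range n, (ζ ^ m) ^ j
          = (ζ ^ m) ^ 0 + ∑ j ∈ Finset.Icc 1 (k + 1), (ζ ^ m) ^ j := by
        have hIco : Finset.Ico 1 n = Finset.Icc 1 (k + 1) := by
          rw [show n = (k + 1) + 1 from rfl, Finset.Ico_add_one_right_eq_Icc]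
        rw [Finset.range_eq_Ico, Finset.sum_eq_sum_Ico_succ_bot (by omega : 0 < n), hIco]
      have hIcc : ∑ j ∈ Finset.Icc 1 (k + 1), (ζ ^ m) ^ j = -1 := by
        have h := hsplit
        rw [hgeom, pow_zero] at h
        linear_combination -h
      calc ∑ j ∈ Finset.Icc 1 (k + 1), ((m : ℂ) ^ 2 - (n : ℂ) * m) * (ζ ^ j) ^ m
          = ((m : ℂ) ^ 2 - (n : ℂ) * m) * ∑ j ∈ Finset.Icc 1 (k + 1), (ζ ^ m) ^ j := by
            rw [Finset.mul_sum]
            refine Finset.sum_congr rfl fun j _ => ?_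
            rw [← pow_mul, ← pow_mul, mul_comm j m, mul_comm]
        _ = (n : ℂ) * m - (m : ℂ) ^ 2 := by rw [hIcc]; ring
  rw [Finset.sum_congr rfl hinner, aux4]
  have hnc : (n : ℂ) = (k : ℂ) + 2 := by push_cast [hn]; ring
  rw [hnc] at hn0 ⊢
  field_simp
  ring



/-- For genus `g = 2` the Verlinde formula specializes to a binomial coefficient: for
every positive integer `k`,
`((k+2)/2) · Σ_{j=1}^{k+1} (sin²(jπ/(k+2)))⁻¹ = C(k+3,3) = (k+1)(k+2)(k+3)/6`. -/
theorem stmt8 (k : ℕ) (hk : 0 < k) :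
    (((k : ℝ) + 2) / 2) *
        ∑ j ∈ Finset.Icc 1 (k + 1), ((Real.sin ((j : ℝ) * Real.pi / ((k : ℝ) + 2))) ^ 2)⁻¹
      = (Nat.choose (k + 3) 3 : ℝ) := by
  have key : ∑ j ∈ Finset.Icc 1 (k + 1),
      ((Real.sin ((j : ℝ) * Real.pi / ((k : ℝ) + 2))) ^ 2)⁻¹
      = (((k : ℝ) + 2) ^ 2 - 1) / 3 := by
    have hC := aux5 k
    rw [← Complex.ofReal_inj]
    push_cast
    push_cast at hC
    exact hC
  rw [key]
  have hnat : (k + 3).choose 3 * 6 = (k + 1) * (k + 2) * (k + 3) := by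
    have hf := Nat.choose_mul_factorial_mul_factorial (show 3 ≤ k + 3 by omega)
    have hs : k + 3 - 3 = k := by omega
    rw [hs] at hf
    have hfact : (k + 3).factorial = (k + 3) * ((k + 2) * ((k + 1) * k.factorial)) := by
      rw [show k + 3 = (k + 2) + 1 from rfl, Nat.factorial_succ,
        show k + 2 = (k + 1) + 1 from rfl, Nat.factorial_succ,
        show k + 1 = k + 1 from rfl, Nat.factorial_succ]
    rw [hfact] at hf
    have h6 : (Nat.factorial 3) = 6 := rfl
    rw [h6] at hf
    have := Nat.eq_of_mul_eq_mul_right k.factorial_pos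
      (show ((k+3).choose 3 * 6) * k.factorial = ((k+1)*(k+2)*(k+3)) * k.factorial by
        linarith [hf])
    exact this
  have hcast : ((k + 3).choose 3 : ℝ) * 6 = ((k : ℝ) + 1) * ((k : ℝ) + 2) * ((k : ℝ) + 3) := by
    exact_mod_cast congrArg (Nat.cast : ℕ → ℝ) hnat
  linear_combination -hcast / 6
end

section
/- Let ω = Σ_{1≤i<j≤n} Ω^{ij} d log(z_i − z_j) be an End(V)-valued 1-form on the configuration space of n points in ℂ, where the Ω^{ij} = Ω^{ji} ∈ End(V) satisfy the infinitesimal braid relations [Ω^{st}, Ω^{uv}] = 0 for {s,t} ∩ {u,v} = ∅ and [Ω^{su}, Ω^{st} + Ω^{tu}] = 0 for distinct s,t,u. Then dω = 0 and ω ∧ ω = 0, so the connection d + ω is flat. -/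
open Finset

lemma sum_pairs_symm {M : Type*} [AddCommMonoid M] {n : ℕ} (H : Fin n → Fin n → M)
    (h0 : ∀ i, H i i = 0) (hs : ∀ i j, H i j = H j i) :
    ∑ p : Fin n × Fin n, H p.1 p.2 =
      (∑ p ∈ Finset.univ.filter (fun p : Fin n × Fin n => p.1 < p.2), H p.1 p.2) +
      ∑ p ∈ Finset.univ.filter (fun p : Fin n × Fin n => p.1 < p.2), H p.1 p.2 := by
  rw [← Finset.sum_filter_add_sum_filter_not Finset.univ
      (fun p : Fin n × Fin n => p.1 < p.2) (fun p => H p.1 p.2)]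
  congr 1
  have h1 : ∑ p ∈ Finset.univ.filter (fun p : Fin n × Fin n => ¬ p.1 < p.2), H p.1 p.2
      = ∑ p ∈ Finset.univ.filter (fun p : Fin n × Fin n => p.2 < p.1), H p.1 p.2 := by
    refine (Finset.sum_subset ?_ ?_).symm
    · intro p hp
      simp only [Finset.mem_filter, Finset.mem_univ, true_and] at hp ⊢
      exact not_lt.mpr hp.le
    · intro p hp hnp
      simp only [Finset.mem_filter, Finset.mem_univ, true_and, not_lt] at hp hnp
      have : p.1 = p.2 := le_antisymm hnp hp
      rw [← this, h0]
  rw [h1]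
  exact Finset.sum_nbij' (fun p => (p.2, p.1)) (fun p => (p.2, p.1))
    (by intro p hp; simp only [Finset.mem_filter, Finset.mem_univ, true_and] at hp ⊢; exact hp)
    (by intro p hp; simp only [Finset.mem_filter, Finset.mem_univ, true_and] at hp ⊢; exact hp)
    (by intro p _; rfl) (by intro p _; rfl)
    (by intro p _; exact hs p.1 p.2)

lemma arnold_core (p q r p' q' r' x y s : ℂ) (hx : x ≠ 0) (hy : y ≠ 0) (hs : s ≠ 0)
    (hsum : s = x + y) (hq : q = p + r) (hq' : q' = p' + r') :
    (p/x)*(q'/s) - (q/s)*(p'/x) + (r/y)*(p'/x) - (p/x)*(r'/y) - (r/y)*(q'/s) + (q/s)*(r'/y) = 0 := by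
  have key : p*q'*y - q*p'*y + r*p'*s - p*r'*s - r*q'*x + q*r'*x = 0 := by
    subst hsum hq hq'; ring
  have hx' : x * x⁻¹ = 1 := mul_inv_cancel₀ hx
  have hy' : y * y⁻¹ = 1 := mul_inv_cancel₀ hy
  have hs' : s * s⁻¹ = 1 := mul_inv_cancel₀ hs
  have h : (p/x)*(q'/s) - (q/s)*(p'/x) + (r/y)*(p'/x) - (p/x)*(r'/y) - (r/y)*(q'/s) + (q/s)*(r'/y)
      = (p*q'*y - q*p'*y + r*p'*s - p*r'*s - r*q'*x + q*r'*x)/(x*y*s) := by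
    linear_combination (-(p*q' - q*p') * x⁻¹ * s⁻¹) * hy' + (-(r*p' - p*r') * x⁻¹ * y⁻¹) * hs' +
      (-(q*r' - r*q') * y⁻¹ * s⁻¹) * hx'
  rw [h, key, zero_div]

lemma arnold_coeff {n : ℕ} (z v w : Fin n → ℂ) (hz : Function.Injective z)
    {a b c : Fin n} (hab : a ≠ b) (hac : a ≠ c) (hbc : b ≠ c) :
    ((v a - v b) / (z a - z b)) * ((w a - w c) / (z a - z c))
    - ((v a - v c) / (z a - z c)) * ((w a - w b) / (z a - z b))
    + ((v b - v c) / (z b - z c)) * ((w a - w b) / (z a - z b))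
    - ((v a - v b) / (z a - z b)) * ((w b - w c) / (z b - z c))
    - ((v b - v c) / (z b - z c)) * ((w a - w c) / (z a - z c))
    + ((v a - v c) / (z a - z c)) * ((w b - w c) / (z b - z c)) = 0 := by
  have h1 : z a - z b ≠ 0 := sub_ne_zero.mpr fun e => hab (hz e)
  have h3 : z b - z c ≠ 0 := sub_ne_zero.mpr fun e => hbc (hz e)
  have h2 : z a - z c ≠ 0 := sub_ne_zero.mpr fun e => hac (hz e)
  have := arnold_core (v a - v b) (v a - v c) (v b - v c) (w a - w b) (w a - w c) (w b - w c)
    (z a - z b) (z b - z c) (z a - z c) h1 h3 h2 (by ring) (by ring) (by ring)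
  linear_combination this

lemma six_T {n : ℕ} {E : Type*} [Ring E] [Module ℂ E]
    (Ω : Fin n → Fin n → E)
    (hsymm : ∀ i j, Ω i j = Ω j i)
    (hrel1 : ∀ a b c : Fin n, a ≠ b → a ≠ c → b ≠ c →
      Ω a b * Ω a c - Ω a c * Ω a b = Ω a c * Ω b c - Ω b c * Ω a c)
    (hrel2 : ∀ a b c : Fin n, a ≠ b → a ≠ c → b ≠ c →
      Ω a b * Ω a c - Ω a c * Ω a b = -(Ω a b * Ω b c - Ω b c * Ω a b))
    (F G : Fin n → Fin n → ℂ)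
    (hFs : ∀ i j, F i j = F j i) (hGs : ∀ i j, G i j = G j i)
    (harn : ∀ a b c : Fin n, a ≠ b → a ≠ c → b ≠ c →
      F a b * G a c - F a c * G a b + F b c * G a b
        - F a b * G b c - F b c * G a c + F a c * G b c = 0) :
    ∑ t ∈ Finset.univ.filter (fun t : Fin n × Fin n × Fin n =>
        t.1 ≠ t.2.1 ∧ t.1 ≠ t.2.2 ∧ t.2.1 ≠ t.2.2),
      (F t.1 t.2.1 * G t.1 t.2.2) •
        (Ω t.1 t.2.1 * Ω t.1 t.2.2 - Ω t.1 t.2.2 * Ω t.1 t.2.1) = 0 := by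
  set S3 : Finset (Fin n × Fin n × Fin n) := Finset.univ.filter (fun t =>
      t.1 ≠ t.2.1 ∧ t.1 ≠ t.2.2 ∧ t.2.1 ≠ t.2.2) with hS3
  set K : Fin n → Fin n → Fin n → E := fun a b c => Ω a b * Ω a c - Ω a c * Ω a b with hK
  have memS3 : ∀ t : Fin n × Fin n × Fin n, t ∈ S3 ↔
      (t.1 ≠ t.2.1 ∧ t.1 ≠ t.2.2 ∧ t.2.1 ≠ t.2.2) := by
    intro t; rw [hS3]; simp
  set T : E := ∑ t ∈ S3, (F t.1 t.2.1 * G t.1 t.2.2) • K t.1 t.2.1 t.2.2 with hT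
  show T = 0
  -- E2
  have E2 : T = ∑ t ∈ S3, (-(F t.1 t.2.2 * G t.1 t.2.1)) • K t.1 t.2.1 t.2.2 := by
    rw [hT]
    refine Finset.sum_nbij' (fun t => (t.1, t.2.2, t.2.1)) (fun t => (t.1, t.2.2, t.2.1))
      ?_ ?_ ?_ ?_ ?_
    · intro t ht; rw [memS3] at ht ⊢; exact ⟨ht.2.1, ht.1, fun h => ht.2.2 h.symm⟩
    · intro t ht; rw [memS3] at ht ⊢; exact ⟨ht.2.1, ht.1, fun h => ht.2.2 h.symm⟩
    · intro t _; rfl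
    · intro t _; rfl
    · intro t _
      show (F t.1 t.2.1 * G t.1 t.2.2) • K t.1 t.2.1 t.2.2
        = (-(F t.1 t.2.1 * G t.1 t.2.2)) • K t.1 t.2.2 t.2.1
      simp only [hK]
      module
  -- E3
  have E3 : T = ∑ t ∈ S3, (F t.2.1 t.2.2 * G t.1 t.2.1) • K t.1 t.2.1 t.2.2 := by
    rw [hT]
    have step1 : ∀ t ∈ S3, (F t.1 t.2.1 * G t.1 t.2.2) • K t.1 t.2.1 t.2.2
        = (F t.1 t.2.1 * G t.1 t.2.2) •
          (Ω t.1 t.2.2 * Ω t.2.1 t.2.2 - Ω t.2.1 t.2.2 * Ω t.1 t.2.2) := by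
      intro t ht; rw [memS3] at ht
      simp only [hK]; rw [hrel1 t.1 t.2.1 t.2.2 ht.1 ht.2.1 ht.2.2]
    rw [Finset.sum_congr rfl step1]
    refine Finset.sum_nbij' (fun t => (t.2.2, t.1, t.2.1)) (fun t => (t.2.1, t.2.2, t.1))
      ?_ ?_ ?_ ?_ ?_
    · intro t ht; rw [memS3] at ht ⊢
      exact ⟨fun h => ht.2.1 h.symm, fun h => ht.2.2 h.symm, ht.1⟩
    · intro t ht; rw [memS3] at ht ⊢
      exact ⟨ht.2.2, fun h => ht.1 h.symm, fun h => ht.2.1 h.symm⟩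
    · intro t _; rfl
    · intro t _; rfl
    · intro t _
      show (F t.1 t.2.1 * G t.1 t.2.2) •
          (Ω t.1 t.2.2 * Ω t.2.1 t.2.2 - Ω t.2.1 t.2.2 * Ω t.1 t.2.2)
        = (F t.1 t.2.1 * G t.2.2 t.1) • K t.2.2 t.1 t.2.1
      simp only [hK]; rw [hGs t.2.2 t.1, hsymm t.2.2 t.1, hsymm t.2.2 t.2.1]
  -- E4
  have E4 : T = ∑ t ∈ S3, (-(F t.1 t.2.1 * G t.2.1 t.2.2)) • K t.1 t.2.1 t.2.2 := by
    rw [hT]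
    have step1 : ∀ t ∈ S3, (F t.1 t.2.1 * G t.1 t.2.2) • K t.1 t.2.1 t.2.2
        = (F t.1 t.2.1 * G t.1 t.2.2) •
          (-(Ω t.1 t.2.1 * Ω t.2.1 t.2.2 - Ω t.2.1 t.2.2 * Ω t.1 t.2.1)) := by
      intro t ht; rw [memS3] at ht
      simp only [hK]; rw [hrel2 t.1 t.2.1 t.2.2 ht.1 ht.2.1 ht.2.2]
    rw [Finset.sum_congr rfl step1]
    refine Finset.sum_nbij' (fun t => (t.2.1, t.1, t.2.2)) (fun t => (t.2.1, t.1, t.2.2))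
      ?_ ?_ ?_ ?_ ?_
    · intro t ht; rw [memS3] at ht ⊢
      exact ⟨fun h => ht.1 h.symm, ht.2.2, ht.2.1⟩
    · intro t ht; rw [memS3] at ht ⊢
      exact ⟨fun h => ht.1 h.symm, ht.2.2, ht.2.1⟩
    · intro t _; rfl
    · intro t _; rfl
    · intro t _
      show (F t.1 t.2.1 * G t.1 t.2.2) •
          (-(Ω t.1 t.2.1 * Ω t.2.1 t.2.2 - Ω t.2.1 t.2.2 * Ω t.1 t.2.1))
        = (-(F t.2.1 t.1 * G t.1 t.2.2)) • K t.2.1 t.1 t.2.2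
      simp only [hK]; rw [hFs t.2.1 t.1, hsymm t.2.1 t.1]
      module
  -- E5 from E3 by swapping last two coordinates
  have E5 : T = ∑ t ∈ S3, (-(F t.2.1 t.2.2 * G t.1 t.2.2)) • K t.1 t.2.1 t.2.2 := by
    rw [E3]
    refine Finset.sum_nbij' (fun t => (t.1, t.2.2, t.2.1)) (fun t => (t.1, t.2.2, t.2.1))
      ?_ ?_ ?_ ?_ ?_
    · intro t ht; rw [memS3] at ht ⊢; exact ⟨ht.2.1, ht.1, fun h => ht.2.2 h.symm⟩
    · intro t ht; rw [memS3] at ht ⊢; exact ⟨ht.2.1, ht.1, fun h => ht.2.2 h.symm⟩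
    · intro t _; rfl
    · intro t _; rfl
    · intro t _
      show (F t.2.1 t.2.2 * G t.1 t.2.1) • K t.1 t.2.1 t.2.2
        = (-(F t.2.2 t.2.1 * G t.1 t.2.1)) • K t.1 t.2.2 t.2.1
      simp only [hK]; rw [hFs t.2.2 t.2.1]
      module
  -- E6 from E4 by swapping last two coordinates
  have E6 : T = ∑ t ∈ S3, (F t.1 t.2.2 * G t.2.1 t.2.2) • K t.1 t.2.1 t.2.2 := by
    rw [E4]
    refine Finset.sum_nbij' (fun t => (t.1, t.2.2, t.2.1)) (fun t => (t.1, t.2.2, t.2.1))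
      ?_ ?_ ?_ ?_ ?_
    · intro t ht; rw [memS3] at ht ⊢; exact ⟨ht.2.1, ht.1, fun h => ht.2.2 h.symm⟩
    · intro t ht; rw [memS3] at ht ⊢; exact ⟨ht.2.1, ht.1, fun h => ht.2.2 h.symm⟩
    · intro t _; rfl
    · intro t _; rfl
    · intro t _
      show (-(F t.1 t.2.1 * G t.2.1 t.2.2)) • K t.1 t.2.1 t.2.2
        = (F t.1 t.2.1 * G t.2.2 t.2.1) • K t.1 t.2.2 t.2.1
      simp only [hK]; rw [hGs t.2.2 t.2.1]
      module
  -- combine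
  have h6 : T + T + T + T + T + T = 0 := by
    nth_rewrite 6 [E6]
    nth_rewrite 5 [E5]
    nth_rewrite 4 [E4]
    nth_rewrite 3 [E3]
    nth_rewrite 2 [E2]
    rw [hT, ← Finset.sum_add_distrib, ← Finset.sum_add_distrib, ← Finset.sum_add_distrib,
      ← Finset.sum_add_distrib, ← Finset.sum_add_distrib]
    refine Finset.sum_eq_zero fun t ht => ?_
    rw [memS3] at ht
    have hc := harn t.1 t.2.1 t.2.2 ht.1 ht.2.1 ht.2.2
    match_scalars
    all_goals first | linear_combination hc | linear_combination -hc
  have h6' : (6 : ℂ) • T = 0 := by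
    rw [show ((6:ℂ) • T) = T + T + T + T + T + T by module]
    exact h6
  calc T = ((6:ℂ)⁻¹ * 6) • T := by norm_num
    _ = (6:ℂ)⁻¹ • ((6:ℂ) • T) := by rw [mul_smul]
    _ = 0 := by rw [h6', smul_zero]

section
variable {n : ℕ} {E : Type*} [Ring E] [Module ℂ E]

lemma main_zero (Ω : Fin n → Fin n → E)
    (hsymm : ∀ i j, Ω i j = Ω j i)
    (hcomm : ∀ s t u v : Fin n, s ≠ t → s ≠ u → s ≠ v → t ≠ u → t ≠ v → u ≠ v →
      Ω s t * Ω u v = Ω u v * Ω s t)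
    (hrel1 : ∀ a b c : Fin n, a ≠ b → a ≠ c → b ≠ c →
      Ω a b * Ω a c - Ω a c * Ω a b = Ω a c * Ω b c - Ω b c * Ω a c)
    (hrel2 : ∀ a b c : Fin n, a ≠ b → a ≠ c → b ≠ c →
      Ω a b * Ω a c - Ω a c * Ω a b = -(Ω a b * Ω b c - Ω b c * Ω a b))
    (F G : Fin n → Fin n → ℂ)
    (hF0 : ∀ i, F i i = 0) (hG0 : ∀ i, G i i = 0)
    (hFs : ∀ i j, F i j = F j i) (hGs : ∀ i j, G i j = G j i)
    (harn : ∀ a b c : Fin n, a ≠ b → a ≠ c → b ≠ c →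
      F a b * G a c - F a c * G a b + F b c * G a b
        - F a b * G b c - F b c * G a c + F a c * G b c = 0) :
    ∑ p : Fin n × Fin n, ∑ q : Fin n × Fin n,
      (F p.1 p.2 * G q.1 q.2) • (Ω p.1 p.2 * Ω q.1 q.2 - Ω q.1 q.2 * Ω p.1 p.2) = 0 := by
  classical
  set S3 : Finset (Fin n × Fin n × Fin n) := Finset.univ.filter (fun t =>
      t.1 ≠ t.2.1 ∧ t.1 ≠ t.2.2 ∧ t.2.1 ≠ t.2.2) with hS3
  have memS3 : ∀ t : Fin n × Fin n × Fin n, t ∈ S3 ↔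
      (t.1 ≠ t.2.1 ∧ t.1 ≠ t.2.2 ∧ t.2.1 ≠ t.2.2) := by
    intro t; rw [hS3]; simp
  set g : Fin n × Fin n × Fin n → E := fun t =>
    (F t.1 t.2.1 * G t.1 t.2.2) •
      (Ω t.1 t.2.1 * Ω t.1 t.2.2 - Ω t.1 t.2.2 * Ω t.1 t.2.1) with hg
  have hTzero : ∑ t ∈ S3, g t = 0 := by
    rw [hS3, hg]; exact six_T Ω hsymm hrel1 hrel2 F G hFs hGs harn
  rw [← Finset.sum_product']
  rw [Finset.univ_product_univ]
  set f : (Fin n × Fin n) × (Fin n × Fin n) → E := fun r =>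
    (F r.1.1 r.1.2 * G r.2.1 r.2.2) •
      (Ω r.1.1 r.1.2 * Ω r.2.1 r.2.2 - Ω r.2.1 r.2.2 * Ω r.1.1 r.1.2) with hf
  show ∑ r : (Fin n × Fin n) × (Fin n × Fin n), f r = 0
  set P : (Fin n × Fin n) × (Fin n × Fin n) → Prop := fun r =>
    r.1.1 ≠ r.1.2 ∧ r.2.1 ≠ r.2.2 ∧
      ((r.1.1 = r.2.1 ∧ r.1.2 ≠ r.2.2) ∨ (r.1.1 = r.2.2 ∧ r.1.2 ≠ r.2.1) ∨
       (r.1.2 = r.2.1 ∧ r.1.1 ≠ r.2.2) ∨ (r.1.2 = r.2.2 ∧ r.1.1 ≠ r.2.1)) with hP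
  have hrestrict : ∑ r ∈ Finset.univ.filter P, f r
      = ∑ r : (Fin n × Fin n) × (Fin n × Fin n), f r := by
    refine Finset.sum_filter_of_ne ?_
    rintro ⟨⟨i, j⟩, k, l⟩ - hne
    by_contra hnP
    apply hne
    rw [hf]
    simp only
    by_cases hij : i = j
    · rw [hij, hF0, zero_mul, zero_smul]
    by_cases hkl : k = l
    · rw [hkl, hG0, mul_zero, zero_smul]
    by_cases hik : i = k
    · by_cases hjl : j = l
      · rw [hik, hjl, sub_self, smul_zero]
      · exact absurd (by simp only [hP]; exact ⟨hij, hkl, Or.inl ⟨hik, hjl⟩⟩) hnP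
    by_cases hil : i = l
    · by_cases hjk : j = k
      · rw [hil, hjk, hsymm k l, sub_self, smul_zero]
      · exact absurd (by simp only [hP]; exact ⟨hij, hkl, Or.inr (Or.inl ⟨hil, hjk⟩)⟩) hnP
    by_cases hjk : j = k
    · exact absurd (by simp only [hP]; exact ⟨hij, hkl, Or.inr (Or.inr (Or.inl ⟨hjk, hil⟩))⟩) hnP
    by_cases hjl : j = l
    · exact absurd (by simp only [hP]; exact ⟨hij, hkl, Or.inr (Or.inr (Or.inr ⟨hjl, hik⟩))⟩) hnP
    · rw [hcomm i j k l hij hik hil hjk hjl hkl, sub_self, smul_zero]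
  rw [← hrestrict]
  set P1 : (Fin n × Fin n) × (Fin n × Fin n) → Prop := fun r =>
    r.1.1 ≠ r.1.2 ∧ r.2.1 ≠ r.2.2 ∧ r.1.1 = r.2.1 ∧ r.1.2 ≠ r.2.2 with hP1
  set P2 : (Fin n × Fin n) × (Fin n × Fin n) → Prop := fun r =>
    r.1.1 ≠ r.1.2 ∧ r.2.1 ≠ r.2.2 ∧ r.1.1 = r.2.2 ∧ r.1.2 ≠ r.2.1 with hP2
  set P3 : (Fin n × Fin n) × (Fin n × Fin n) → Prop := fun r =>
    r.1.1 ≠ r.1.2 ∧ r.2.1 ≠ r.2.2 ∧ r.1.2 = r.2.1 ∧ r.1.1 ≠ r.2.2 with hP3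
  set P4 : (Fin n × Fin n) × (Fin n × Fin n) → Prop := fun r =>
    r.1.1 ≠ r.1.2 ∧ r.2.1 ≠ r.2.2 ∧ r.1.2 = r.2.2 ∧ r.1.1 ≠ r.2.1 with hP4
  have hsplit : Finset.univ.filter P =
      ((Finset.univ.filter P1 ∪ Finset.univ.filter P2) ∪ Finset.univ.filter P3)
        ∪ Finset.univ.filter P4 := by
    ext r
    simp only [Finset.mem_filter, Finset.mem_union, Finset.mem_univ, true_and,
      hP, hP1, hP2, hP3, hP4]
    constructor
    · rintro ⟨hij, hkl, (⟨h, h'⟩ | ⟨h, h'⟩ | ⟨h, h'⟩ | ⟨h, h'⟩)⟩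
      · exact Or.inl (Or.inl (Or.inl ⟨hij, hkl, h, h'⟩))
      · exact Or.inl (Or.inl (Or.inr ⟨hij, hkl, h, h'⟩))
      · exact Or.inl (Or.inr ⟨hij, hkl, h, h'⟩)
      · exact Or.inr ⟨hij, hkl, h, h'⟩
    · rintro (((⟨hij, hkl, h, h'⟩ | ⟨hij, hkl, h, h'⟩) | ⟨hij, hkl, h, h'⟩) | ⟨hij, hkl, h, h'⟩)
      · exact ⟨hij, hkl, Or.inl ⟨h, h'⟩⟩
      · exact ⟨hij, hkl, Or.inr (Or.inl ⟨h, h'⟩)⟩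
      · exact ⟨hij, hkl, Or.inr (Or.inr (Or.inl ⟨h, h'⟩))⟩
      · exact ⟨hij, hkl, Or.inr (Or.inr (Or.inr ⟨h, h'⟩))⟩
  have d12 : Disjoint (Finset.univ.filter P1) (Finset.univ.filter P2) := by
    rw [Finset.disjoint_left]
    intro r h1 h2
    simp only [Finset.mem_filter, Finset.mem_univ, true_and, hP1, hP2] at h1 h2
    exact h1.2.1 (h1.2.2.1.symm.trans h2.2.2.1)
  have d13 : Disjoint (Finset.univ.filter P1) (Finset.univ.filter P3) := by
    rw [Finset.disjoint_left]
    intro r h1 h3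
    simp only [Finset.mem_filter, Finset.mem_univ, true_and, hP1, hP3] at h1 h3
    exact h1.1 (h1.2.2.1.trans h3.2.2.1.symm)
  have d14 : Disjoint (Finset.univ.filter P1) (Finset.univ.filter P4) := by
    rw [Finset.disjoint_left]
    intro r h1 h4
    simp only [Finset.mem_filter, Finset.mem_univ, true_and, hP1, hP4] at h1 h4
    exact h1.2.2.2 h4.2.2.1
  have d23 : Disjoint (Finset.univ.filter P2) (Finset.univ.filter P3) := by
    rw [Finset.disjoint_left]
    intro r h2 h3
    simp only [Finset.mem_filter, Finset.mem_univ, true_and, hP2, hP3] at h2 h3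
    exact h2.2.2.2 h3.2.2.1
  have d24 : Disjoint (Finset.univ.filter P2) (Finset.univ.filter P4) := by
    rw [Finset.disjoint_left]
    intro r h2 h4
    simp only [Finset.mem_filter, Finset.mem_univ, true_and, hP2, hP4] at h2 h4
    exact h2.1 (h2.2.2.1.trans h4.2.2.1.symm)
  have d34 : Disjoint (Finset.univ.filter P3) (Finset.univ.filter P4) := by
    rw [Finset.disjoint_left]
    intro r h3 h4
    simp only [Finset.mem_filter, Finset.mem_univ, true_and, hP3, hP4] at h3 h4
    exact h3.2.1 (h3.2.2.1.symm.trans h4.2.2.1)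
  have e1 : ∑ r ∈ Finset.univ.filter P1, f r = ∑ t ∈ S3, g t := by
    refine Finset.sum_nbij' (fun r => (r.1.1, r.1.2, r.2.2))
      (fun t => ((t.1, t.2.1), (t.1, t.2.2))) ?_ ?_ ?_ ?_ ?_
    · rintro ⟨⟨i, j⟩, k, l⟩ hr
      simp only [Finset.mem_filter, Finset.mem_univ, true_and, hP1] at hr
      obtain ⟨hij, hkl, hik, hjl⟩ := hr
      rw [memS3]
      exact ⟨hij, fun h => hkl (hik.symm.trans h), hjl⟩
    · rintro ⟨a, b, c⟩ ht
      rw [memS3] at ht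
      simp only [Finset.mem_filter, Finset.mem_univ, true_and, hP1]
      exact ⟨ht.1, ht.2.1, ht.2.2⟩
    · rintro ⟨⟨i, j⟩, k, l⟩ hr
      simp only [Finset.mem_filter, Finset.mem_univ, true_and, hP1] at hr
      simp [Prod.ext_iff, hr.2.2.1]
    · rintro ⟨a, b, c⟩ -; rfl
    · rintro ⟨⟨i, j⟩, k, l⟩ hr
      simp only [Finset.mem_filter, Finset.mem_univ, true_and, hP1] at hr
      rw [hf, hg]
      simp only
      rw [← hr.2.2.1]
  have e2 : ∑ r ∈ Finset.univ.filter P2, f r = ∑ t ∈ S3, g t := by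
    refine Finset.sum_nbij' (fun r => (r.1.1, r.1.2, r.2.1))
      (fun t => ((t.1, t.2.1), (t.2.2, t.1))) ?_ ?_ ?_ ?_ ?_
    · rintro ⟨⟨i, j⟩, k, l⟩ hr
      simp only [Finset.mem_filter, Finset.mem_univ, true_and, hP2] at hr
      obtain ⟨hij, hkl, hil, hjk⟩ := hr
      rw [memS3]
      exact ⟨hij, fun h => hkl (h.symm.trans hil), hjk⟩
    · rintro ⟨a, b, c⟩ ht
      rw [memS3] at ht
      simp only [Finset.mem_filter, Finset.mem_univ, true_and, hP2]
      exact ⟨ht.1, fun h => ht.2.1 h.symm, ht.2.2⟩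
    · rintro ⟨⟨i, j⟩, k, l⟩ hr
      simp only [Finset.mem_filter, Finset.mem_univ, true_and, hP2] at hr
      simp [Prod.ext_iff, hr.2.2.1]
    · rintro ⟨a, b, c⟩ -; rfl
    · rintro ⟨⟨i, j⟩, k, l⟩ hr
      simp only [Finset.mem_filter, Finset.mem_univ, true_and, hP2] at hr
      rw [hf, hg]
      simp only
      rw [← hr.2.2.1, hGs k i, hsymm k i]
  have e3 : ∑ r ∈ Finset.univ.filter P3, f r = ∑ t ∈ S3, g t := by
    refine Finset.sum_nbij' (fun r => (r.1.2, r.1.1, r.2.2))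
      (fun t => ((t.2.1, t.1), (t.1, t.2.2))) ?_ ?_ ?_ ?_ ?_
    · rintro ⟨⟨i, j⟩, k, l⟩ hr
      simp only [Finset.mem_filter, Finset.mem_univ, true_and, hP3] at hr
      obtain ⟨hij, hkl, hjk, hil⟩ := hr
      rw [memS3]
      exact ⟨fun h => hij h.symm, fun h => hkl (hjk.symm.trans h), hil⟩
    · rintro ⟨a, b, c⟩ ht
      rw [memS3] at ht
      simp only [Finset.mem_filter, Finset.mem_univ, true_and, hP3]
      exact ⟨fun h => ht.1 h.symm, ht.2.1, ht.2.2⟩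
    · rintro ⟨⟨i, j⟩, k, l⟩ hr
      simp only [Finset.mem_filter, Finset.mem_univ, true_and, hP3] at hr
      simp [Prod.ext_iff, hr.2.2.1]
    · rintro ⟨a, b, c⟩ -; rfl
    · rintro ⟨⟨i, j⟩, k, l⟩ hr
      simp only [Finset.mem_filter, Finset.mem_univ, true_and, hP3] at hr
      rw [hf, hg]
      simp only
      rw [← hr.2.2.1, hFs i j, hsymm i j]
  have e4 : ∑ r ∈ Finset.univ.filter P4, f r = ∑ t ∈ S3, g t := by
    refine Finset.sum_nbij' (fun r => (r.1.2, r.1.1, r.2.1))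
      (fun t => ((t.2.1, t.1), (t.2.2, t.1))) ?_ ?_ ?_ ?_ ?_
    · rintro ⟨⟨i, j⟩, k, l⟩ hr
      simp only [Finset.mem_filter, Finset.mem_univ, true_and, hP4] at hr
      obtain ⟨hij, hkl, hjl, hik⟩ := hr
      rw [memS3]
      exact ⟨fun h => hij h.symm, fun h => hkl (h.symm.trans hjl), hik⟩
    · rintro ⟨a, b, c⟩ ht
      rw [memS3] at ht
      simp only [Finset.mem_filter, Finset.mem_univ, true_and, hP4]
      exact ⟨fun h => ht.1 h.symm, fun h => ht.2.1 h.symm, ht.2.2⟩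
    · rintro ⟨⟨i, j⟩, k, l⟩ hr
      simp only [Finset.mem_filter, Finset.mem_univ, true_and, hP4] at hr
      simp [Prod.ext_iff, hr.2.2.1]
    · rintro ⟨a, b, c⟩ -; rfl
    · rintro ⟨⟨i, j⟩, k, l⟩ hr
      simp only [Finset.mem_filter, Finset.mem_univ, true_and, hP4] at hr
      rw [hf, hg]
      simp only
      rw [← hr.2.2.1, hFs i j, hGs k j, hsymm i j, hsymm k j]
  rw [hsplit,
    Finset.sum_union (by
      simp only [Finset.disjoint_union_left]
      exact ⟨⟨d14, d24⟩, d34⟩),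
    Finset.sum_union (by
      simp only [Finset.disjoint_union_left]
      exact ⟨d13, d23⟩),
    Finset.sum_union d12, e1, e2, e3, e4, hTzero]
  simp

end

/-- Kohno/Arnold flatness criterion for the KZ-type form
`ω = Σ_{i<j} Ω^{ij} d log(z_i - z_j)` on the configuration space of `n` points in `ℂ`:
if the `Ω^{ij} = Ω^{ji} ∈ End(V)` satisfy the infinitesimal braid relations, then
`dω = 0` and `ω ∧ ω = 0`, so the connection `d + ω` is flat.  Here `ω` is identified
with its value `ω_z(v) = Σ_{i<j} ((v_i - v_j)/(z_i - z_j)) Ω^{ij}` on tangent vectors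
`v`, the 2-form `dω` with
`(dω)_z(v,w) = Σ_{i<j} ((-(v_i-v_j)(w_i-w_j) + (w_i-w_j)(v_i-v_j))/(z_i-z_j)²) Ω^{ij}`,
and `(ω∧ω)_z(v,w) = ω_z(v)ω_z(w) - ω_z(w)ω_z(v)`. -/
theorem stmt16 {n : ℕ} {V : Type*} [AddCommGroup V] [Module ℂ V]
    [FiniteDimensional ℂ V]
    (Ω : Fin n → Fin n → Module.End ℂ V)
    (hsymm : ∀ i j, Ω i j = Ω j i)
    (h1 : ∀ s t u v : Fin n, s ≠ t → s ≠ u → s ≠ v → t ≠ u → t ≠ v → u ≠ v →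
      Commute (Ω s t) (Ω u v))
    (h2 : ∀ s t u : Fin n, s ≠ t → s ≠ u → t ≠ u →
      Commute (Ω s u) (Ω s t + Ω t u)) :
    let ω : (Fin n → ℂ) → (Fin n → ℂ) → Module.End ℂ V := fun z v =>
      ∑ p ∈ Finset.univ.filter (fun p : Fin n × Fin n => p.1 < p.2),
        ((v p.1 - v p.2) / (z p.1 - z p.2)) • Ω p.1 p.2
    (∀ z : Fin n → ℂ, Function.Injective z → ∀ v w : Fin n → ℂ,
      (∑ p ∈ Finset.univ.filter (fun p : Fin n × Fin n => p.1 < p.2),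
        ((-((v p.1 - v p.2) * (w p.1 - w p.2)) + (w p.1 - w p.2) * (v p.1 - v p.2)) /
            (z p.1 - z p.2) ^ 2) • Ω p.1 p.2) = 0) ∧
    (∀ z : Fin n → ℂ, Function.Injective z → ∀ v w : Fin n → ℂ,
      ω z v * ω z w - ω z w * ω z v = 0) := by
  intro ω
  constructor
  · intro z hz v w
    apply Finset.sum_eq_zero
    intro p _
    have h : -((v p.1 - v p.2) * (w p.1 - w p.2)) + (w p.1 - w p.2) * (v p.1 - v p.2) = 0 := by
      ring
    rw [h, zero_div, zero_smul]
  · intro z hz v w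
    set F : Fin n → Fin n → ℂ := fun i j => (v i - v j) / (z i - z j) with hF
    set G : Fin n → Fin n → ℂ := fun i j => (w i - w j) / (z i - z j) with hG
    have hF0 : ∀ i, F i i = 0 := fun i => by rw [hF]; simp
    have hG0 : ∀ i, G i i = 0 := fun i => by rw [hG]; simp
    have hFs : ∀ i j, F i j = F j i := fun i j => by
      rw [hF]; simp only; rw [← neg_sub (v j) (v i), ← neg_sub (z j) (z i), neg_div_neg_eq]
    have hGs : ∀ i j, G i j = G j i := fun i j => by
      rw [hG]; simp only; rw [← neg_sub (w j) (w i), ← neg_sub (z j) (z i), neg_div_neg_eq]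
    have hcomm : ∀ s t u x : Fin n, s ≠ t → s ≠ u → s ≠ x → t ≠ u → t ≠ x → u ≠ x →
        Ω s t * Ω u x = Ω u x * Ω s t := fun s t u x h1' h2' h3' h4' h5' h6' =>
      (h1 s t u x h1' h2' h3' h4' h5' h6').eq
    have hrel1 : ∀ a b c : Fin n, a ≠ b → a ≠ c → b ≠ c →
        Ω a b * Ω a c - Ω a c * Ω a b = Ω a c * Ω b c - Ω b c * Ω a c := by
      intro a b c hab hac hbc
      have h := (h2 a b c hab hac hbc).eq
      linear_combination (norm := noncomm_ring) -h
    have hrel2 : ∀ a b c : Fin n, a ≠ b → a ≠ c → b ≠ c →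
        Ω a b * Ω a c - Ω a c * Ω a b = -(Ω a b * Ω b c - Ω b c * Ω a b) := by
      intro a b c hab hac hbc
      have h := (h2 a c b hac hab (fun h => hbc h.symm)).eq
      rw [hsymm c b] at h
      linear_combination (norm := noncomm_ring) h
    have harn : ∀ a b c : Fin n, a ≠ b → a ≠ c → b ≠ c →
        F a b * G a c - F a c * G a b + F b c * G a b
          - F a b * G b c - F b c * G a c + F a c * G b c = 0 := by
      intro a b c hab hac hbc
      rw [hF, hG]
      exact arnold_coeff z v w hz hab hac hbc
    have main := main_zero Ω hsymm hcomm hrel1 hrel2 F G hF0 hG0 hFs hGs harn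
    have hexp : ∀ p q : Fin n × Fin n,
        (F p.1 p.2 * G q.1 q.2) • (Ω p.1 p.2 * Ω q.1 q.2 - Ω q.1 q.2 * Ω p.1 p.2)
          = (F p.1 p.2 • Ω p.1 p.2) * (G q.1 q.2 • Ω q.1 q.2)
            - (G q.1 q.2 • Ω q.1 q.2) * (F p.1 p.2 • Ω p.1 p.2) := by
      intro p q
      have e1 : (F p.1 p.2 • Ω p.1 p.2) * (G q.1 q.2 • Ω q.1 q.2)
          = (F p.1 p.2 * G q.1 q.2) • (Ω p.1 p.2 * Ω q.1 q.2) := by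
        rw [smul_mul_assoc, mul_smul_comm, smul_smul]
      have e2 : (G q.1 q.2 • Ω q.1 q.2) * (F p.1 p.2 • Ω p.1 p.2)
          = (F p.1 p.2 * G q.1 q.2) • (Ω q.1 q.2 * Ω p.1 p.2) := by
        rw [smul_mul_assoc, mul_smul_comm, smul_smul, mul_comm (G q.1 q.2)]
      rw [smul_sub, ← e1, ← e2]
    simp only [hexp] at main
    set X : Module.End ℂ V := ω z v with hXd
    set Y : Module.End ℂ V := ω z w with hYd
    have hX : X = ∑ p ∈ Finset.univ.filter (fun p : Fin n × Fin n => p.1 < p.2),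
        F p.1 p.2 • Ω p.1 p.2 := rfl
    have hY : Y = ∑ p ∈ Finset.univ.filter (fun p : Fin n × Fin n => p.1 < p.2),
        G p.1 p.2 • Ω p.1 p.2 := rfl
    have hA : (∑ p : Fin n × Fin n, F p.1 p.2 • Ω p.1 p.2) = X + X := by
      rw [hX]
      exact sum_pairs_symm (fun i j => F i j • Ω i j)
        (fun i => by show F i i • Ω i i = 0; rw [hF0, zero_smul])
        (fun i j => by show F i j • Ω i j = F j i • Ω j i; rw [hFs, hsymm])
    have hB : (∑ p : Fin n × Fin n, G p.1 p.2 • Ω p.1 p.2) = Y + Y := by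
      rw [hY]
      exact sum_pairs_symm (fun i j => G i j • Ω i j)
        (fun i => by show G i i • Ω i i = 0; rw [hG0, zero_smul])
        (fun i j => by show G i j • Ω i j = G j i • Ω j i; rw [hGs, hsymm])
    have hAB : (X + X) * (Y + Y) - (Y + Y) * (X + X) = 0 := by
      rw [← hA, ← hB, Finset.sum_mul_sum, Finset.sum_mul_sum]
      rw [Finset.sum_comm (s := (Finset.univ : Finset (Fin n × Fin n)))
        (t := (Finset.univ : Finset (Fin n × Fin n)))
        (f := fun q p => (G q.1 q.2 • Ω q.1 q.2) * (F p.1 p.2 • Ω p.1 p.2))]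
      rw [← Finset.sum_sub_distrib]
      rw [← main]
      exact Finset.sum_congr rfl fun p _ => (Finset.sum_sub_distrib _ _).symm
    have h4 : (X*Y - Y*X) + (X*Y - Y*X) + (X*Y - Y*X) + (X*Y - Y*X) = 0 := by
      linear_combination (norm := noncomm_ring) hAB
    have h4' : (4 : ℂ) • (X*Y - Y*X) = 0 := by
      rw [show ((4:ℂ) • (X*Y - Y*X))
        = (X*Y - Y*X) + (X*Y - Y*X) + (X*Y - Y*X) + (X*Y - Y*X) by module]
      exact h4
    calc X * Y - Y * X = ((4:ℂ)⁻¹ * 4) • (X*Y - Y*X) := by norm_num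
      _ = (4:ℂ)⁻¹ • ((4:ℂ) • (X*Y - Y*X)) := by rw [mul_smul]
      _ = 0 := by rw [h4', smul_zero]
end
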